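/- For the Dirichlet kernel $D_n^H({\mathbf t}) = \sum_{{\mathbf k} \in {\mathbb H}_n^*} e^{\frac{2\pi i}{d+1} {\mathbf k} \cdot {\mathbf t}}$, one has $D_n^H({\mathbf t}) = \Theta_{n+1}({\mathbf t}) - \Theta_n({\mathbf t})$, where $\Theta_n({\mathbf t}) = \prod_{j=1}^{d+1} \frac{\sin \pi n t_j}{\sin \pi t_j}$, for all ${\mathbf t} \in {\mathbb R}_H^{d+1}$ where the right side is defined. -/

import Mathlib

open Real Complex

/-- The index set `ℍ_n^*`. -/
def Hstar (d n : ℕ) : Set (Fin (d + 1) → ℤ) :=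
  {k | (∑ i, k i = 0) ∧ (∀ i j : Fin (d + 1), ((d : ℤ) + 1) ∣ (k i - k j)) ∧
    ∀ i j : Fin (d + 1), |k i - k j| ≤ ((d : ℤ) + 1) * n}

/-- The function `Θ_n(t) = ∏_j sin(π n t_j) / sin(π t_j)`. -/
noncomputable def ThetaFn (d : ℕ) (n : ℕ) (t : Fin (d + 1) → ℝ) : ℝ :=
  ∏ j, Real.sin (π * n * t j) / Real.sin (π * t j)

lemma exp_two_pi_sub_one (a : ℝ) :
    Complex.exp (2 * π * Complex.I * a) - 1
      = Complex.exp (π * Complex.I * a) * (2 * Complex.I * Real.sin (π * a)) := by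
  have h1 : (2 * (π:ℂ) * Complex.I * a) = ((π * a : ℝ) : ℂ) * Complex.I + ((π * a : ℝ) : ℂ) * Complex.I := by
    push_cast; ring
  have h2 : ((π:ℂ) * Complex.I * a) = ((π * a : ℝ) : ℂ) * Complex.I := by push_cast; ring
  rw [h1, h2, Complex.exp_add, Complex.exp_mul_I, ← Complex.ofReal_sin, ← Complex.ofReal_cos]
  have hP : ((Real.sin (π*a) : ℂ))^2 + ((Real.cos (π*a) : ℂ))^2 = 1 := by
    norm_cast; exact Real.sin_sq_add_cos_sq _
  have hI : (Complex.I)^2 = -1 := Complex.I_sq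
  linear_combination hP - ((Real.sin (π*a):ℂ))^2 * hI

lemma geom_sum_exp (m : ℕ) (x : ℝ) (hx : Real.sin (π * x) ≠ 0) :
    ∑ l ∈ Finset.range m, Complex.exp (2 * π * Complex.I * l * x)
      = Complex.exp (π * Complex.I * (m - 1) * x)
        * ((Real.sin (π * m * x) : ℂ) / (Real.sin (π * x) : ℂ)) := by
  have hsx : ((Real.sin (π * x) : ℝ) : ℂ) ≠ 0 := by exact_mod_cast hx
  have hr : Complex.exp (2 * π * Complex.I * x) ≠ 1 := by
    intro h
    have := exp_two_pi_sub_one x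
    rw [h, sub_self] at this
    have h2 := this.symm
    rcases mul_eq_zero.mp h2 with h3 | h3
    · exact Complex.exp_ne_zero _ h3
    · rcases mul_eq_zero.mp h3 with h4 | h4
      · simp at h4
      · exact hsx h4
  have hpow : ∀ l : ℕ, Complex.exp (2 * π * Complex.I * x) ^ l
      = Complex.exp (2 * π * Complex.I * l * x) := by
    intro l
    rw [← Complex.exp_nat_mul]
    ring_nf
  have hgeom := geom_sum_eq hr m
  have ecast : 2 * (π:ℂ) * Complex.I * m * x = 2 * π * Complex.I * (((m:ℝ) * x : ℝ) : ℂ) := by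
    push_cast; ring
  have e3 : π * ((m:ℝ) * x) = π * m * x := by ring
  have k1 := exp_two_pi_sub_one ((m:ℝ) * x)
  rw [e3] at k1
  have e2 : Complex.exp ((π:ℂ) * Complex.I * (((m:ℝ) * x : ℝ) : ℂ))
      = Complex.exp (π * Complex.I * (m - 1) * x) * Complex.exp (π * Complex.I * x) := by
    rw [← Complex.exp_add]; congr 1; push_cast; ring
  calc ∑ l ∈ Finset.range m, Complex.exp (2 * π * Complex.I * l * x)
      = ∑ l ∈ Finset.range m, Complex.exp (2 * π * Complex.I * x) ^ l := by
        refine Finset.sum_congr rfl fun l _ => (hpow l).symm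
    _ = (Complex.exp (2 * π * Complex.I * x) ^ m - 1)
          / (Complex.exp (2 * π * Complex.I * x) - 1) := hgeom
    _ = Complex.exp (π * Complex.I * (m - 1) * x)
        * ((Real.sin (π * m * x) : ℂ) / (Real.sin (π * x) : ℂ)) := by
        rw [hpow m, ecast, k1, exp_two_pi_sub_one x, e2]
        set E := Complex.exp ((π:ℂ) * Complex.I * (m - 1) * x)
        set B := Complex.exp ((π:ℂ) * Complex.I * x)
        have hB : B ≠ 0 := Complex.exp_ne_zero _
        have hne : B * (2 * Complex.I) ≠ 0 := by
          apply mul_ne_zero hB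
          simp [Complex.I_ne_zero]
        have r1 : E * B * (2 * Complex.I * (Real.sin (π * m * x) : ℂ))
            = (E * (Real.sin (π * m * x) : ℂ)) * (B * (2 * Complex.I)) := by ring
        have r2 : B * (2 * Complex.I * (Real.sin (π * x) : ℂ))
            = (Real.sin (π * x) : ℂ) * (B * (2 * Complex.I)) := by ring
        rw [r1, r2, mul_div_mul_right _ _ hne, mul_div_assoc]

lemma theta_expand (d m : ℕ) (t : Fin (d + 1) → ℝ)
    (ht0 : ∑ i, t i = 0) (hsin : ∀ j, Real.sin (π * t j) ≠ 0) :
    ((ThetaFn d m t : ℝ) : ℂ)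
      = ∑ l ∈ Fintype.piFinset (fun _ : Fin (d + 1) => Finset.range m),
          Complex.exp (2 * π * Complex.I * ∑ i, (l i : ℂ) * (t i : ℂ)) := by
  have htC : ∑ i, (t i : ℂ) = 0 := by
    rw [← Complex.ofReal_sum]
    exact_mod_cast ht0
  symm
  calc ∑ l ∈ Fintype.piFinset (fun _ : Fin (d + 1) => Finset.range m),
          Complex.exp (2 * π * Complex.I * ∑ i, (l i : ℂ) * (t i : ℂ))
      = ∑ l ∈ Fintype.piFinset (fun _ : Fin (d + 1) => Finset.range m),
          ∏ i, Complex.exp (2 * π * Complex.I * (l i : ℂ) * (t i : ℂ)) := by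
        refine Finset.sum_congr rfl fun l _ => ?_
        rw [← Complex.exp_sum]
        congr 1
        rw [Finset.mul_sum]
        refine Finset.sum_congr rfl fun i _ => by ring
    _ = ∏ i, ∑ l ∈ Finset.range m, Complex.exp (2 * π * Complex.I * (l : ℂ) * (t i : ℂ)) := by
        rw [Finset.prod_univ_sum]
    _ = ∏ i, Complex.exp (π * Complex.I * (m - 1) * t i)
          * ((Real.sin (π * m * t i) : ℂ) / (Real.sin (π * t i) : ℂ)) := by
        refine Finset.prod_congr rfl fun i _ => geom_sum_exp m (t i) (hsin i)
    _ = (∏ i, Complex.exp ((π:ℂ) * Complex.I * (m - 1) * t i))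
          * ∏ i, ((Real.sin (π * m * t i) : ℂ) / (Real.sin (π * t i) : ℂ)) := by
        rw [Finset.prod_mul_distrib]
    _ = ((ThetaFn d m t : ℝ) : ℂ) := by
        rw [← Complex.exp_sum]
        have : ∑ i, (π:ℂ) * Complex.I * (m - 1) * t i = 0 := by
          rw [← Finset.mul_sum, htC, mul_zero]
        rw [this, Complex.exp_zero, one_mul, ThetaFn]
        push_cast
        ring

lemma sum_min_zero (d n : ℕ) (f : (Fin (d + 1) → ℕ) → ℂ)
    (hshift : ∀ l, f (fun i => l i + 1) = f l) :
    ∑ l ∈ (Fintype.piFinset (fun _ : Fin (d + 1) => Finset.range (n + 1))).filter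
        (fun l => ∃ i, l i = 0), f l
      = ∑ l ∈ Fintype.piFinset (fun _ : Fin (d + 1) => Finset.range (n + 1)), f l
        - ∑ l ∈ Fintype.piFinset (fun _ : Fin (d + 1) => Finset.range n), f l := by
  rw [eq_sub_iff_add_eq]
  have hinj : Function.Injective (fun (l : Fin (d + 1) → ℕ) (i : Fin (d + 1)) => l i + 1) := by
    intro a b hab
    funext i
    have h : a i + 1 = b i + 1 := congrFun hab i
    omega
  have himg : (Fintype.piFinset (fun _ : Fin (d + 1) => Finset.range (n + 1))).filter
        (fun l => ¬ ∃ i, l i = 0)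
      = (Fintype.piFinset (fun _ : Fin (d + 1) => Finset.range n)).image
          (fun l i => l i + 1) := by
    ext l
    simp only [Finset.mem_filter, Finset.mem_image, Fintype.mem_piFinset, Finset.mem_range,
      not_exists]
    constructor
    · rintro ⟨h1, h2⟩
      refine ⟨fun i => l i - 1, fun i => ?_, ?_⟩
      · show l i - 1 < n; have := h1 i; have := h2 i; omega
      · funext i; show l i - 1 + 1 = l i; have := h2 i; omega
    · rintro ⟨a, ha, rfl⟩
      refine ⟨fun i => ?_, fun i => ?_⟩
      · show a i + 1 < n + 1; have := ha i; omega
      · show a i + 1 ≠ 0; omega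
  have h2 : ∑ l ∈ Fintype.piFinset (fun _ : Fin (d + 1) => Finset.range n), f l
      = ∑ l ∈ (Fintype.piFinset (fun _ : Fin (d + 1) => Finset.range (n + 1))).filter
          (fun l => ¬ ∃ i, l i = 0), f l := by
    rw [himg, Finset.sum_image (fun a _ b _ h => hinj h)]
    exact (Finset.sum_congr rfl fun l _ => (hshift l).symm)
  rw [h2]
  exact Finset.sum_filter_add_sum_filter_not _ _ _

def psiMap (d : ℕ) (l : Fin (d + 1) → ℕ) : Fin (d + 1) → ℤ :=
  fun i => ((d : ℤ) + 1) * l i - ∑ j, (l j : ℤ)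

lemma psiMap_injOn (d n : ℕ) :
    ∀ l ∈ (Fintype.piFinset (fun _ : Fin (d + 1) => Finset.range (n + 1))).filter
        (fun l => ∃ i, l i = 0),
      ∀ l' ∈ (Fintype.piFinset (fun _ : Fin (d + 1) => Finset.range (n + 1))).filter
        (fun l => ∃ i, l i = 0),
      psiMap d l = psiMap d l' → l = l' := by
  intro l hl l' hl' h
  simp only [Finset.mem_filter, Fintype.mem_piFinset, Finset.mem_range] at hl hl'
  obtain ⟨-, i0, hi0⟩ := hl
  obtain ⟨-, j0, hj0⟩ := hl'
  have key : ∀ i, ((d : ℤ) + 1) * ((l i : ℤ) - l' i) = ∑ j, (l j : ℤ) - ∑ j, (l' j : ℤ) := by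
    intro i
    have := congrFun h i
    simp only [psiMap] at this
    linarith [this]
  have h1 := key i0
  have h2 := key j0
  rw [hi0] at h1
  rw [hj0] at h2
  have hd : (0 : ℤ) < (d : ℤ) + 1 := by positivity
  push_cast at h1 h2
  have hle : ∑ j, (l j : ℤ) - ∑ j, (l' j : ℤ) ≤ 0 := by
    nlinarith [mul_nonneg (le_of_lt hd) (Int.ofNat_nonneg (l' i0))]
  have hge : (0:ℤ) ≤ ∑ j, (l j : ℤ) - ∑ j, (l' j : ℤ) := by
    nlinarith [mul_nonneg (le_of_lt hd) (Int.ofNat_nonneg (l j0))]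
  have hzero : ∑ j, (l j : ℤ) - ∑ j, (l' j : ℤ) = 0 := le_antisymm hle hge
  funext i
  have := key i
  rw [hzero] at this
  have : ((l i : ℤ) - l' i) = 0 := by
    rcases mul_eq_zero.mp this with h' | h'
    · omega
    · exact h'
  omega

lemma hstar_eq_image (d n : ℕ) :
    Hstar d n = ↑(((Fintype.piFinset (fun _ : Fin (d + 1) => Finset.range (n + 1))).filter
      (fun l => ∃ i, l i = 0)).image (psiMap d)) := by
  ext k
  simp only [Finset.coe_image, Set.mem_image, Finset.mem_coe, Finset.mem_filter,
    Fintype.mem_piFinset, Finset.mem_range, Hstar, Set.mem_setOf_eq]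
  constructor
  · rintro ⟨hsum, hdvd, habs⟩
    obtain ⟨j0, -, hj0⟩ := Finset.exists_min_image Finset.univ k Finset.univ_nonempty
    have hd : (0 : ℤ) < (d : ℤ) + 1 := by positivity
    set l : Fin (d + 1) → ℕ := fun i => ((k i - k j0) / ((d : ℤ) + 1)).toNat with hldef
    have hquot : ∀ i, ((d : ℤ) + 1) * (l i : ℤ) = k i - k j0 := by
      intro i
      have hnn : 0 ≤ k i - k j0 := by
        have := hj0 i (Finset.mem_univ i); linarith
      have hcast : ((l i : ℤ)) = (k i - k j0) / ((d : ℤ) + 1) :=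
        Int.toNat_of_nonneg (Int.ediv_nonneg hnn (le_of_lt hd))
      rw [hcast, Int.mul_ediv_cancel' (hdvd i j0)]
    have hsuml : ((d : ℤ) + 1) * ∑ j, (l j : ℤ) = -(((d : ℤ) + 1) * k j0) := by
      rw [Finset.mul_sum]
      have : ∑ j, ((d : ℤ) + 1) * (l j : ℤ) = ∑ j, (k j - k j0) := by
        refine Finset.sum_congr rfl fun j _ => hquot j
      rw [this, Finset.sum_sub_distrib, hsum, Finset.sum_const, Finset.card_univ,
        Fintype.card_fin]
      push_cast; ring
    have hsuml' : ∑ j, (l j : ℤ) = -(k j0) := by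
      have := mul_left_cancel₀ (ne_of_gt hd) (by rw [hsuml]; ring : ((d : ℤ) + 1) * ∑ j, (l j : ℤ) = ((d : ℤ) + 1) * (-(k j0)))
      exact this
    refine ⟨l, ⟨fun i => ?_, ⟨j0, ?_⟩⟩, ?_⟩
    · -- l i < n + 1
      have hb := habs i j0
      have hnn : 0 ≤ k i - k j0 := by
        have := hj0 i (Finset.mem_univ i); linarith
      rw [abs_of_nonneg hnn] at hb
      have := hquot i
      have hle : ((d : ℤ) + 1) * (l i : ℤ) ≤ ((d : ℤ) + 1) * n := by rw [this]; exact hb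
      have : (l i : ℤ) ≤ n := le_of_mul_le_mul_left hle hd
      omega
    · -- l j0 = 0
      have := hquot j0
      simp only [sub_self] at this
      have : (l j0 : ℤ) = 0 := by
        rcases mul_eq_zero.mp this with h' | h'
        · omega
        · exact h'
      omega
    · funext i
      simp only [psiMap, hsuml', hquot i]
      ring
  · rintro ⟨l, ⟨hl, i0, hi0⟩, rfl⟩
    refine ⟨?_, fun i j => ⟨(l i : ℤ) - l j, by simp only [psiMap]; ring⟩, fun i j => ?_⟩
    · simp only [psiMap]
      rw [Finset.sum_sub_distrib, ← Finset.mul_sum, Finset.sum_const, Finset.card_univ,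
        Fintype.card_fin]
      push_cast; ring
    · have hdiff : psiMap d l i - psiMap d l j = ((d : ℤ) + 1) * ((l i : ℤ) - l j) := by
        simp only [psiMap]; ring
      rw [hdiff, abs_mul]
      have h1 : |(d : ℤ) + 1| = (d : ℤ) + 1 := abs_of_pos (by positivity)
      rw [h1]
      have h2 : |(l i : ℤ) - l j| ≤ n := by
        rw [abs_le]
        have := hl i; have := hl j
        omega
      have hd : (0 : ℤ) ≤ (d : ℤ) + 1 := by positivity
      exact mul_le_mul_of_nonneg_left h2 hd


/-- Compact formula for the Dirichlet kernel:
`D_n^H(t) = Θ_{n+1}(t) - Θ_n(t)` whenever `sin(π t_j) ≠ 0` for all `j`. -/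
theorem dirichlet_kernel_compact (d n : ℕ) (t : Fin (d + 1) → ℝ)
    (ht0 : ∑ i, t i = 0) (hsin : ∀ j, Real.sin (π * t j) ≠ 0) :
    ∑ᶠ k : Hstar d n,
        Complex.exp (2 * π * Complex.I / ((d : ℂ) + 1) * ∑ i, (k.1 i : ℂ) * (t i : ℂ)) =
      ((ThetaFn d (n + 1) t : ℝ) : ℂ) - ((ThetaFn d n t : ℝ) : ℂ) := by
  classical
  have htC : ∑ i, (t i : ℂ) = 0 := by
    rw [← Complex.ofReal_sum]
    exact_mod_cast ht0
  have hdC : ((d : ℂ) + 1) ≠ 0 := by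
    have := Nat.cast_add_one_ne_zero (R := ℂ) d
    exact_mod_cast this
  set F : (Fin (d + 1) → ℤ) → ℂ := fun k =>
    Complex.exp (2 * π * Complex.I / ((d : ℂ) + 1) * ∑ i, (k i : ℂ) * (t i : ℂ)) with hFdef
  set B := (Fintype.piFinset (fun _ : Fin (d + 1) => Finset.range (n + 1))).filter
      (fun l => ∃ i, l i = 0) with hBdef
  have step1 : (∑ᶠ k : Hstar d n,
      Complex.exp (2 * π * Complex.I / ((d : ℂ) + 1) * ∑ i, (k.1 i : ℂ) * (t i : ℂ)))
      = ∑ l ∈ B, F (psiMap d l) := by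
    calc (∑ᶠ k : Hstar d n,
        Complex.exp (2 * π * Complex.I / ((d : ℂ) + 1) * ∑ i, (k.1 i : ℂ) * (t i : ℂ)))
        = ∑ᶠ k : Hstar d n, F ↑k := rfl
      _ = ∑ᶠ k ∈ Hstar d n, F k := finsum_set_coe_eq_finsum_mem (f := F) _
      _ = ∑ᶠ k ∈ ((B.image (psiMap d) : Finset _) : Set _), F k := by
            rw [hstar_eq_image d n]
      _ = ∑ k ∈ B.image (psiMap d), F k := finsum_mem_coe_finset _ _
      _ = ∑ l ∈ B, F (psiMap d l) := Finset.sum_image (psiMap_injOn d n)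
  have hF : ∀ l : Fin (d + 1) → ℕ,
      F (psiMap d l) = Complex.exp (2 * π * Complex.I * ∑ i, (l i : ℂ) * (t i : ℂ)) := by
    intro l
    have hS : ∑ i, ((psiMap d l i : ℂ)) * (t i : ℂ)
        = ((d : ℂ) + 1) * ∑ i, (l i : ℂ) * (t i : ℂ) := by
      simp only [psiMap]
      push_cast
      calc ∑ i, (((d : ℂ) + 1) * (l i : ℂ) - ∑ j, (l j : ℂ)) * (t i : ℂ)
          = ∑ i, ((((d : ℂ) + 1) * ((l i : ℂ) * (t i : ℂ)))
              - (∑ j, (l j : ℂ)) * (t i : ℂ)) := by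
            refine Finset.sum_congr rfl fun i _ => by ring
        _ = ((d : ℂ) + 1) * (∑ i, (l i : ℂ) * (t i : ℂ))
              - (∑ j, (l j : ℂ)) * ∑ i, (t i : ℂ) := by
            rw [Finset.sum_sub_distrib, ← Finset.mul_sum, ← Finset.mul_sum]
        _ = ((d : ℂ) + 1) * ∑ i, (l i : ℂ) * (t i : ℂ) := by
            rw [htC, mul_zero, sub_zero]
    rw [hFdef]
    simp only
    rw [hS]
    congr 1
    field_simp
  have hshift : ∀ l : Fin (d + 1) → ℕ,
      Complex.exp (2 * π * Complex.I * ∑ i, (((fun i => l i + 1) i : ℕ) : ℂ) * (t i : ℂ))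
        = Complex.exp (2 * π * Complex.I * ∑ i, (l i : ℂ) * (t i : ℂ)) := by
    intro l
    congr 1
    have : ∑ i, (((l i + 1 : ℕ) : ℂ)) * (t i : ℂ)
        = ∑ i, ((l i : ℂ) * (t i : ℂ) + (t i : ℂ)) := by
      refine Finset.sum_congr rfl fun i _ => by push_cast; ring
    rw [this, Finset.sum_add_distrib, htC, add_zero]
  rw [step1]
  have step2 : ∑ l ∈ B, F (psiMap d l)
      = ∑ l ∈ B, Complex.exp (2 * π * Complex.I * ∑ i, (l i : ℂ) * (t i : ℂ)) :=
    Finset.sum_congr rfl fun l _ => hF l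
  rw [step2, hBdef,
    sum_min_zero d n (fun l => Complex.exp (2 * π * Complex.I * ∑ i, (l i : ℂ) * (t i : ℂ)))
      hshift,
    theta_expand d (n + 1) t ht0 hsin, theta_expand d n t ht0 hsin]
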